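/- Let g : X_i^* → X_2^* be a Gödel numbering and let T ⊆ X_i^* be a set for which there exist a real constant c > 0 and infinitely many n with card{x ∈ T : |x|_i = n} ≥ 2^{c·n}. Then for every integer N there exists x ∈ T with H_2(g(x)) > N·⌈log_i(|x|_i)⌉; that is, ρ^2_g is unbounded on T. -/

import Mathlib

open scoped ENNReal

/-- Finite strings over an alphabet with `i` letters. -/
abbrev Str (i : ℕ) : Type := List (Fin i)

/-- A set of strings is prefix-free: no element is a proper prefix of another. -/
def PrefixFree {i : ℕ} (S : Set (Str i)) : Prop :=
  ∀ x ∈ S, ∀ y ∈ S, x <+: y → x = y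

/-- A self-delimiting machine over the alphabet with `i` letters: a partial computable
function on strings whose domain is prefix-free. -/
structure Machine (i : ℕ) where
  f : Str i →. Str i
  partrec : Partrec f
  prefixFree : PrefixFree f.Dom

/-- Program-size complexity of `x` relative to the machine `T`:
the least length of a program `y` with `T(y) = x` (with `min ∅ = ∞`). -/
noncomputable def Hc {i : ℕ} (T : Machine i) (x : Str i) : ℝ≥0∞ :=
  sInf {n : ℝ≥0∞ | ∃ y : Str i, (y.length : ℝ≥0∞) = n ∧ x ∈ T.f y}

/-- `U` is a universal machine: it minimizes program-size complexity up to an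
additive constant among all machines. -/
def IsUniversal {i : ℕ} (U : Machine i) : Prop :=
  ∀ T : Machine i, ∃ c : ℕ, ∀ x : Str i, Hc U x ≤ Hc T x + (c : ℝ≥0∞)

/-- A set of strings is computably enumerable if it is the domain of a
partial computable function. -/
def CEset {i : ℕ} (A : Set (Str i)) : Prop :=
  ∃ f : Str i →. Str i, Partrec f ∧ A = f.Dom

/-- A Gödel numbering for `L`: a computable function into binary strings,
injective on `L`. -/
def GoedelNumbering {i : ℕ} (L : Set (Str i)) (g : Str i → Str 2) : Prop :=
  Computable g ∧ Set.InjOn g L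

/-- `ρ¹_g(x) = H₂(g(x))/|x|ᵢ` for `x ≠ λ`, and `0` otherwise. -/
noncomputable def rho1G {i : ℕ} (U2 : Machine 2) (g : Str i → Str 2) (x : Str i) : ℝ≥0∞ :=
  if x = [] then 0 else Hc U2 (g x) / (x.length : ℝ≥0∞)

/-- `ρ¹ᵢ(x) = Hᵢ(x)/|x|ᵢ` for `x ≠ λ`, and `0` otherwise. -/
noncomputable def rho1I {i : ℕ} (U : Machine i) (x : Str i) : ℝ≥0∞ :=
  if x = [] then 0 else Hc U x / (x.length : ℝ≥0∞)

/-- `ρ²_g(x) = H₂(g(x))/⌈log_i(|x|ᵢ)⌉` for `|x|ᵢ > 1`, and `0` otherwise. -/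
noncomputable def rho2G {i : ℕ} (U2 : Machine 2) (g : Str i → Str 2) (x : Str i) : ℝ≥0∞ :=
  if x.length ≤ 1 then 0 else Hc U2 (g x) / ((⌈Real.logb i (x.length : ℝ)⌉₊ : ℕ) : ℝ≥0∞)

/-- `ρ²ᵢ(x) = Hᵢ(x)/⌈log_i(|x|ᵢ)⌉` for `|x|ᵢ > 1`, and `0` otherwise. -/
noncomputable def rho2I {i : ℕ} (U : Machine i) (x : Str i) : ℝ≥0∞ :=
  if x.length ≤ 1 then 0 else Hc U x / ((⌈Real.logb i (x.length : ℝ)⌉₊ : ℕ) : ℝ≥0∞)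

/-- If `T ⊆ Xᵢ*` contains at least `2^{c·n}` strings of length `n` for some real
`c > 0` and infinitely many `n`, then for every integer `N` there is `x ∈ T` with
`H₂(g(x)) > N·⌈log_i(|x|ᵢ)⌉`; that is, `ρ²_g` is unbounded on `T`. -/
-- counting lemma
lemma count_aux {i : ℕ} (U2f : Str 2 →. Str 2) (g : Str i → Str 2)
    (hginj : Set.InjOn g Set.univ) (S : Set (Str i)) (K : ℕ)
    (h : ∀ x ∈ S, ∃ y : Str 2, y.length ≤ K ∧ g x ∈ U2f y) :
    S.ncard ≤ 2 ^ K * (K + 1) := by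
  classical
  set P : Str i → Prop := fun x => ∃ y : Str 2, y.length ≤ K ∧ g x ∈ U2f y with hP
  set F : Str i → ((Fin K → Fin 2) × Fin (K + 1)) := fun x =>
    if hx : P x then
      ⟨fun j => (hx.choose).getD j 0, ⟨(hx.choose).length, Nat.lt_succ_of_le hx.choose_spec.1⟩⟩
    else ⟨fun _ => 0, 0⟩ with hF
  have hmaps : ∀ x ∈ S, F x ∈ (Set.univ : Set ((Fin K → Fin 2) × Fin (K + 1))) := by
    intro x _; trivial
  have hinj : Set.InjOn F S := by
    intro x₁ hx₁ x₂ hx₂ heq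
    have p₁ : P x₁ := h x₁ hx₁
    have p₂ : P x₂ := h x₂ hx₂
    rw [hF] at heq
    simp only [dif_pos p₁, dif_pos p₂, Prod.mk.injEq, Fin.mk.injEq] at heq
    have hy : p₁.choose = p₂.choose := by
      apply List.ext_getElem heq.2
      intro j h1 h2
      have hj : j < K := lt_of_lt_of_le h1 p₁.choose_spec.1
      have := congrFun heq.1 ⟨j, hj⟩
      rw [← List.getD_eq_getElem _ 0 h1, ← List.getD_eq_getElem _ 0 h2]; exact this
    have : g x₁ = g x₂ := Part.mem_unique p₁.choose_spec.2 (hy ▸ p₂.choose_spec.2)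
    exact hginj trivial trivial this
  have := Set.ncard_le_ncard_of_injOn F hmaps hinj Set.finite_univ
  simpa [Set.ncard_univ] using this

theorem stmt_14 {i : ℕ} (hi : 2 ≤ i) (U2 : Machine 2) (hU2 : IsUniversal U2)
    (g : Str i → Str 2) (hg : GoedelNumbering Set.univ g)
    (T : Set (Str i)) (c : ℝ) (hc : 0 < c)
    (hbig : ∀ m : ℕ, ∃ n : ℕ, m ≤ n ∧
      (2 : ℝ) ^ (c * (n : ℝ)) ≤ (Set.ncard {x : Str i | x ∈ T ∧ x.length = n} : ℝ)) :
    ∀ N : ℕ, ∃ x ∈ T,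
      ((N * ⌈Real.logb i (x.length : ℝ)⌉₊ : ℕ) : ℝ≥0∞) < Hc U2 (g x) := by
  intro N
  by_contra hcon
  push_neg at hcon
  set A : ℝ := (8 * N + 2) / c with hA
  have hA0 : 0 ≤ A := by positivity
  obtain ⟨n, hn1, hncard⟩ := hbig (max 1 ⌈A ^ 2⌉₊)
  have hn_ge1 : 1 ≤ n := le_trans (le_max_left _ _) hn1
  have hnA : A ^ 2 ≤ (n : ℝ) :=
    le_trans (Nat.le_ceil _) (Nat.cast_le.mpr (le_trans (le_max_right _ _) hn1))
  set s : ℝ := Real.sqrt n with hs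
  have hs0 : 0 ≤ s := Real.sqrt_nonneg _
  have hs1 : 1 ≤ s := by
    rw [hs, Real.le_sqrt zero_le_one (Nat.cast_nonneg n)]
    simpa using (Nat.one_le_cast.mpr hn_ge1 : (1:ℝ) ≤ n)
  have hsA : A ≤ s := by
    rw [hs, Real.le_sqrt hA0 (Nat.cast_nonneg n)]; exact hnA
  have hss : s * s = (n : ℝ) := Real.mul_self_sqrt (Nat.cast_nonneg n)
  set K : ℕ := N * ⌈Real.logb i (n : ℝ)⌉₊ with hK
  -- bound on K
  have hlogb : Real.logb i (n : ℝ) ≤ 3 * s := by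
    have hlogn : Real.log (n : ℝ) ≤ 2 * s := by
      have h1 : Real.log (n : ℝ) = 2 * Real.log s := by
        rw [← hss, Real.log_mul (by linarith) (by linarith)]; ring
      rw [h1]
      have := Real.log_le_sub_one_of_pos (lt_of_lt_of_le zero_lt_one hs1)
      nlinarith
    have hlog2 : (2:ℝ)/3 ≤ Real.log i := by
      have h2 : Real.log 2 ≤ Real.log i := by
        apply Real.log_le_log (by norm_num)
        exact_mod_cast hi
      nlinarith [Real.log_two_gt_d9]
    have hlogipos : 0 < Real.log i := lt_of_lt_of_le (by norm_num) hlog2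
    rw [Real.logb, div_le_iff₀ hlogipos]
    nlinarith [Real.log_nonneg (by exact_mod_cast hn_ge1 : (1:ℝ) ≤ (n:ℝ)), hs0]
  have hKbound : (K : ℝ) ≤ N * (3 * s + 1) := by
    rw [hK]
    push_cast
    have hceil : (⌈Real.logb i (n : ℝ)⌉₊ : ℝ) ≤ 3 * s + 1 := by
      have hnn : 0 ≤ Real.logb i (n : ℝ) :=
        Real.logb_nonneg (by exact_mod_cast lt_of_lt_of_le one_lt_two hi)
          (by exact_mod_cast hn_ge1)
      have := Nat.ceil_lt_add_one hnn
      linarith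
    have : (0:ℝ) ≤ N := Nat.cast_nonneg N
    nlinarith
  have hKn : (2 * K : ℝ) < c * n := by
    have h1 : c * (n : ℝ) = c * s * s := by rw [mul_assoc, hss]
    have h2 : (8 * N + 2 : ℝ) * s ≤ c * s * s := by
      have := mul_le_mul_of_nonneg_right hsA hs0
      rw [hA, div_mul_eq_mul_div, div_le_iff₀ hc] at this
      nlinarith
    nlinarith [Nat.cast_nonneg (α := ℝ) N]
  -- extract programs
  have hprog : ∀ x ∈ {x : Str i | x ∈ T ∧ x.length = n},
      ∃ y : Str 2, y.length ≤ K ∧ g x ∈ U2.f y := by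
    rintro x ⟨hxT, hxl⟩
    have hle : Hc U2 (g x) ≤ (K : ℝ≥0∞) := by
      have := hcon x hxT
      rwa [hxl, ← hK] at this
    have hlt : Hc U2 (g x) < (K : ℝ≥0∞) + 1 :=
      lt_of_le_of_lt hle (ENNReal.lt_add_right (ENNReal.natCast_ne_top K) one_ne_zero)
    rw [Hc, sInf_lt_iff] at hlt
    obtain ⟨r, ⟨y, hyr, hymem⟩, hrlt⟩ := hlt
    refine ⟨y, ?_, hymem⟩
    rw [← hyr] at hrlt
    have : ((y.length : ℕ) : ℝ≥0∞) < ((K + 1 : ℕ) : ℝ≥0∞) := by push_cast; exact hrlt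
    exact Nat.lt_succ_iff.mp (by exact_mod_cast this)
  have hcount := count_aux U2.f g hg.2 _ K hprog
  -- numeric contradiction
  have hb1 : ((2 ^ K * (K + 1) : ℕ) : ℝ) ≤ (2:ℝ) ^ (2 * K : ℕ) := by
    push_cast
    rw [two_mul, pow_add]
    have h1 : (K + 1 : ℝ) ≤ (2:ℝ) ^ K := by
      exact_mod_cast Nat.succ_le_of_lt (Nat.lt_two_pow_self)
    nlinarith [pow_pos (zero_lt_two (α := ℝ)) K]
  have hb2 : (2:ℝ) ^ (2 * K : ℕ) < (2:ℝ) ^ (c * (n:ℝ)) := by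
    rw [← Real.rpow_natCast 2 (2 * K)]
    apply Real.rpow_lt_rpow_left_iff (x := 2) one_lt_two |>.mpr
    push_cast
    exact hKn
  have hle2 : ((Set.ncard {x : Str i | x ∈ T ∧ x.length = n} : ℕ) : ℝ) ≤ (2:ℝ) ^ (2 * K : ℕ) :=
    le_trans (Nat.cast_le.mpr hcount) hb1
  linarith
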